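/- Fix n ≥ 1 and work in the ZMod 2-module W of functions Fin n × Fin n → ZMod 2, with B_i the indicator of block i, 𝟙 the all-ones vector, H_X the span of the adjacent double-block vectors {B_i + B_{i+1}}, and H_Z the span of the within-block adjacent-pair vectors {δ_{(i,j)} + δ_{(i,j+1)}}. Then: (i) H_X is orthogonal to H_Z, i.e. ⟨u, v⟩ = 0 for all u ∈ H_X, v ∈ H_Z (the CSS condition); (ii) the orthogonal complement of H_Z in W is exactly the set of block-constant vectors; (iii) if n is odd, then 𝟙 ∉ H_X, and every block-constant vector lies in H_X ∪ (𝟙 + H_X), so the quotient of the orthogonal complement of H_Z by H_X has exactly two elements (the generalized Shor code encodes one logical qubit). -/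
import Mathlib


/-- The indicator vector `B_i` of block `i` among qubits indexed by
`Fin n × Fin n`. -/
def Blk (n : ℕ) (i : Fin n) : Fin n × Fin n → ZMod 2 := fun p => if p.1 = i then 1 else 0

/-- The all-ones vector `𝟙 = ∑ i, B_i`. -/
def allOnes (n : ℕ) : Fin n × Fin n → ZMod 2 := ∑ i : Fin n, Blk n i

/-- `H_X`, the span of the adjacent double-block vectors `B_i + B_{i+1}`. -/
def HX (n : ℕ) : Submodule (ZMod 2) (Fin n × Fin n → ZMod 2) :=
  Submodule.span (ZMod 2)
    {w | ∃ (i : Fin n) (hi : (i : ℕ) + 1 < n), w = Blk n i + Blk n ⟨(i : ℕ) + 1, hi⟩}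

/-- `H_Z`, the span of the within-block adjacent-pair vectors
`δ_{(i,j)} + δ_{(i,j+1)}`. -/
def HZ (n : ℕ) : Submodule (ZMod 2) (Fin n × Fin n → ZMod 2) :=
  Submodule.span (ZMod 2)
    {w | ∃ (i j : Fin n) (hj : (j : ℕ) + 1 < n),
      w = Pi.single (i, j) 1 + Pi.single (i, ⟨(j : ℕ) + 1, hj⟩) 1}

/-- The bilinear form `⟨u, v⟩ = ∑ p, u(p) v(p)` over `ZMod 2`. -/
def ip (n : ℕ) (u v : Fin n × Fin n → ZMod 2) : ZMod 2 := ∑ p : Fin n × Fin n, u p * v p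

/-- `v` is block-constant if `v(i,j) = v(i,j')` for all `i, j, j'`. -/
def blockConstant (n : ℕ) (v : Fin n × Fin n → ZMod 2) : Prop :=
  ∀ i j j' : Fin n, v (i, j) = v (i, j')

/-- The orthogonal complement of `H_Z` with respect to `⟨·,·⟩`, as a submodule. -/
def HZperp (n : ℕ) : Submodule (ZMod 2) (Fin n × Fin n → ZMod 2) where
  carrier := {v | ∀ u ∈ HZ n, ip n u v = 0}
  add_mem' := by
    intro a b ha hb u hu
    have h : ip n u (a + b) = ip n u a + ip n u b := by
      unfold ip
      rw [← Finset.sum_add_distrib]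
      exact Finset.sum_congr rfl fun p _ => by simp [mul_add]
    rw [h, ha u hu, hb u hu, add_zero]
  zero_mem' := by
    intro u hu
    unfold ip
    simp
  smul_mem' := by
    intro cc v hv u hu
    have h : ip n u (cc • v) = cc * ip n u v := by
      unfold ip
      rw [Finset.mul_sum]
      refine Finset.sum_congr rfl fun p _ => ?_
      simp only [Pi.smul_apply, smul_eq_mul]
      ring
    rw [h, hv u hu, mul_zero]

-- aux lemmas
lemma ip_add_left (n : ℕ) (u u' v : Fin n × Fin n → ZMod 2) :
    ip n (u + u') v = ip n u v + ip n u' v := by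
  simp [ip, add_mul, Finset.sum_add_distrib]

lemma ip_single (n : ℕ) (p : Fin n × Fin n) (v : Fin n × Fin n → ZMod 2) :
    ip n (Pi.single p 1) v = v p := by
  simp [ip, Pi.single_apply, ite_mul]

/-- ip as a linear map in the first argument -/
def ipL (n : ℕ) (v : Fin n × Fin n → ZMod 2) :
    (Fin n × Fin n → ZMod 2) →ₗ[ZMod 2] ZMod 2 where
  toFun u := ip n u v
  map_add' u u' := ip_add_left n u u' v
  map_smul' c u := by
    simp only [ip, RingHom.id_apply, Finset.mul_sum, Pi.smul_apply, smul_eq_mul, mul_assoc]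

/-- the block-sum linear functional -/
def Sfun (n : ℕ) (hn : 1 ≤ n) : (Fin n × Fin n → ZMod 2) →ₗ[ZMod 2] ZMod 2 where
  toFun v := ∑ i : Fin n, v (i, ⟨0, hn⟩)
  map_add' u v := by simp [Finset.sum_add_distrib]
  map_smul' c v := by simp [Finset.mul_sum]

lemma allOnes_apply (n : ℕ) (p : Fin n × Fin n) : allOnes n p = 1 := by
  simp [allOnes, Blk]

lemma blockConstant_repr (n : ℕ) (hn : 1 ≤ n) (v : Fin n × Fin n → ZMod 2)
    (hv : ∀ i j j' : Fin n, v (i, j) = v (i, j')) :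
    v = ∑ i : Fin n, v (i, ⟨0, hn⟩) • Blk n i := by
  funext p
  obtain ⟨a, b⟩ := p
  rw [Finset.sum_apply]
  simp only [Pi.smul_apply, Blk, smul_eq_mul, mul_ite, mul_one, mul_zero]
  rw [Finset.sum_ite_eq Finset.univ a (fun i => v (i, ⟨0, hn⟩))]
  simp [hv a b ⟨0, hn⟩]

lemma Blk_zero_add_mem (n : ℕ) (hn : 1 ≤ n) (j : Fin n) :
    Blk n ⟨0, hn⟩ + Blk n j ∈ HX n := by
  obtain ⟨jv, hj⟩ := j
  induction jv with
  | zero =>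
      have : Blk n ⟨0, hn⟩ + Blk n ⟨0, hj⟩ = 0 := by
        funext p; simp [Blk, CharTwo.add_self_eq_zero]
      rw [this]; exact (HX n).zero_mem
  | succ k ih =>
      have hk : k < n := Nat.lt_of_succ_lt hj
      have hgen : Blk n ⟨k, hk⟩ + Blk n ⟨k + 1, hj⟩ ∈ HX n :=
        Submodule.subset_span ⟨⟨k, hk⟩, hj, rfl⟩
      have heq : Blk n ⟨0, hn⟩ + Blk n ⟨k + 1, hj⟩ =
          (Blk n ⟨0, hn⟩ + Blk n ⟨k, hk⟩) + (Blk n ⟨k, hk⟩ + Blk n ⟨k + 1, hj⟩) := by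
        funext p
        simp only [Pi.add_apply]
        rw [add_assoc, ← add_assoc (Blk n ⟨k, hk⟩ p), CharTwo.add_self_eq_zero, zero_add]
      rw [heq]
      exact (HX n).add_mem (ih hk) hgen

lemma comb_mem_HX (n : ℕ) (hn : 1 ≤ n) (c : Fin n → ZMod 2)
    (hs : ∑ i : Fin n, c i = 0) : ∑ i : Fin n, c i • Blk n i ∈ HX n := by
  have h1 : ∑ i : Fin n, c i • Blk n i = ∑ i : Fin n, c i • (Blk n ⟨0, hn⟩ + Blk n i) := by
    rw [Finset.sum_congr rfl (fun i _ => smul_add (c i) (Blk n ⟨0, hn⟩) (Blk n i))]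
    rw [Finset.sum_add_distrib, ← Finset.sum_smul, hs, zero_smul, zero_add]
  rw [h1]
  exact Submodule.sum_mem _ fun i _ => (HX n).smul_mem _ (Blk_zero_add_mem n hn i)

lemma blockConstant_mem_HX (n : ℕ) (hn : 1 ≤ n) (v : Fin n × Fin n → ZMod 2)
    (hv : ∀ i j j' : Fin n, v (i, j) = v (i, j'))
    (hs : ∑ i : Fin n, v (i, ⟨0, hn⟩) = 0) : v ∈ HX n := by
  rw [blockConstant_repr n hn v hv]
  exact comb_mem_HX n hn _ hs

lemma HX_le_ker_S (n : ℕ) (hn : 1 ≤ n) : HX n ≤ LinearMap.ker (Sfun n hn) := by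
  rw [HX, Submodule.span_le]
  rintro w ⟨i, hi, rfl⟩
  simp only [SetLike.mem_coe, LinearMap.mem_ker, Sfun, LinearMap.coe_mk, AddHom.coe_mk]
  have : ∀ a : Fin n, (Blk n i + Blk n ⟨(i : ℕ) + 1, hi⟩) (a, ⟨0, hn⟩) =
      (if a = i then 1 else 0) + (if a = ⟨(i : ℕ) + 1, hi⟩ then 1 else 0) := by
    intro a; simp [Blk]
  rw [Finset.sum_congr rfl fun a _ => this a, Finset.sum_add_distrib]
  have hne : i ≠ (⟨(i : ℕ) + 1, hi⟩ : Fin n) := by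
    intro h; rw [Fin.ext_iff] at h; simp at h
  simp
  decide

lemma blockConstant_ortho (n : ℕ) (v : Fin n × Fin n → ZMod 2)
    (hv : ∀ i j j' : Fin n, v (i, j) = v (i, j')) :
    ∀ u ∈ HZ n, ip n u v = 0 := by
  intro u hu
  have hle : HZ n ≤ LinearMap.ker (ipL n v) := by
    rw [HZ, Submodule.span_le]
    rintro w ⟨i, j, hj, rfl⟩
    simp only [SetLike.mem_coe, LinearMap.mem_ker]
    show ip n _ v = 0
    rw [ip_add_left, ip_single, ip_single, hv i j ⟨(j : ℕ) + 1, hj⟩,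
      CharTwo.add_self_eq_zero]
  exact hle hu

lemma HZperp_blockConstant (n : ℕ) (hn : 1 ≤ n) (v : Fin n × Fin n → ZMod 2)
    (hv : ∀ u ∈ HZ n, ip n u v = 0) :
    ∀ i j j' : Fin n, v (i, j) = v (i, j') := by
  have key : ∀ i : Fin n, ∀ j : Fin n, v (i, j) = v (i, ⟨0, hn⟩) := by
    intro i j
    obtain ⟨jv, hj⟩ := j
    induction jv with
    | zero => rfl
    | succ k ih =>
        have hk : k < n := Nat.lt_of_succ_lt hj
        have hgen : (Pi.single (i, (⟨k, hk⟩ : Fin n)) 1 +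
            Pi.single (i, (⟨k + 1, hj⟩ : Fin n)) 1 : Fin n × Fin n → ZMod 2) ∈ HZ n :=
          Submodule.subset_span ⟨i, ⟨k, hk⟩, hj, rfl⟩
        have h0 := hv _ hgen
        rw [ip_add_left, ip_single, ip_single] at h0
        have heq : v (i, ⟨k, hk⟩) = v (i, ⟨k + 1, hj⟩) := by
          have h1 := eq_neg_of_add_eq_zero_left h0
          rwa [CharTwo.neg_eq] at h1
        rw [← heq]; exact ih hk
  intro i j j'
  rw [key i j, key i j']

/-- block-constant functions form a submodule -/
def BCsub (n : ℕ) : Submodule (ZMod 2) (Fin n × Fin n → ZMod 2) where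
  carrier := {v | ∀ i j j' : Fin n, v (i, j) = v (i, j')}
  add_mem' := by intro a b ha hb i j j'; simp [ha i j j', hb i j j']
  zero_mem' := by intro i j j'; rfl
  smul_mem' := by intro c v hv i j j'; simp [hv i j j']

lemma HX_blockConstant (n : ℕ) (u : Fin n × Fin n → ZMod 2) (hu : u ∈ HX n) :
    ∀ i j j' : Fin n, u (i, j) = u (i, j') := by
  have hle : HX n ≤ BCsub n := by
    rw [HX, Submodule.span_le]
    rintro w ⟨i, hi, rfl⟩
    intro a j j'
    simp [Blk]
  exact hle hu

lemma ip_comm (n : ℕ) (u v : Fin n × Fin n → ZMod 2) : ip n u v = ip n v u := by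
  simp [ip, mul_comm]

/-- The generalized `[[n², 1, n]]` Shor code: (i) `H_X ⟂ H_Z` (the CSS
condition); (ii) the orthogonal complement of `H_Z` is exactly the set of
block-constant vectors; (iii) for odd `n`, `𝟙 ∉ H_X`, every block-constant
vector lies in `H_X ∪ (𝟙 + H_X)`, and the quotient `H_Z^⟂ / H_X` has exactly
two elements: the code encodes one logical qubit. -/
theorem shor_code_css_structure (n : ℕ) (hn : 1 ≤ n) :
    (∀ u ∈ HX n, ∀ v ∈ HZ n, ip n u v = 0) ∧
    ((HZperp n : Set (Fin n × Fin n → ZMod 2)) = {v | blockConstant n v}) ∧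
    (Odd n →
      allOnes n ∉ HX n ∧
      (∀ v : Fin n × Fin n → ZMod 2, blockConstant n v →
          v ∈ HX n ∨ ∃ y ∈ HX n, v = allOnes n + y) ∧
      Nat.card (↥(HZperp n) ⧸ Submodule.comap (HZperp n).subtype (HX n)) = 2) := by
  have hcases : ∀ c : ZMod 2, c = 0 ∨ c = 1 := by decide
  refine ⟨?_, ?_, ?_⟩
  · intro u hu v hv
    rw [ip_comm]
    exact blockConstant_ortho n u (HX_blockConstant n u hu) v hv
  · ext v
    constructor
    · intro hv
      exact HZperp_blockConstant n hn v hv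
    · intro hv
      exact blockConstant_ortho n v hv
  · intro hodd
    have hn1 : ((n : ℕ) : ZMod 2) = 1 := by
      rw [← ZMod.natCast_mod n 2, Nat.odd_iff.mp hodd, Nat.cast_one]
    have hSall : Sfun n hn (allOnes n) = 1 := by
      show ∑ i : Fin n, allOnes n (i, ⟨0, hn⟩) = 1
      rw [Finset.sum_congr rfl fun i _ => allOnes_apply n _]
      simp [Finset.card_univ, hn1]
    have hallmem : allOnes n ∈ HZperp n :=
      blockConstant_ortho n (allOnes n) (fun i j j' => by rw [allOnes_apply, allOnes_apply])
    refine ⟨?_, ?_, ?_⟩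
    · intro h
      have := HX_le_ker_S n hn h
      rw [LinearMap.mem_ker, hSall] at this
      exact one_ne_zero this
    · intro v hv
      rcases hcases (∑ i : Fin n, v (i, ⟨0, hn⟩)) with h0 | h1
      · exact Or.inl (blockConstant_mem_HX n hn v hv h0)
      · right
        refine ⟨allOnes n + v, ?_, ?_⟩
        · apply blockConstant_mem_HX n hn
          · intro i j j'
            simp only [Pi.add_apply, allOnes_apply, hv i j j']
          · have : ∀ i : Fin n, (allOnes n + v) (i, ⟨0, hn⟩) = 1 + v (i, ⟨0, hn⟩) := by
              intro i; simp [allOnes_apply]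
            rw [Finset.sum_congr rfl fun i _ => this i, Finset.sum_add_distrib, h1]
            simp [Finset.card_univ, hn1]
            decide
        · funext p
          simp only [Pi.add_apply]
          rw [← add_assoc, CharTwo.add_self_eq_zero, zero_add]
    · set φ := (Sfun n hn).comp (HZperp n).subtype with hφ
      have hker : Submodule.comap (HZperp n).subtype (HX n) = LinearMap.ker φ := by
        ext x
        obtain ⟨v, hv⟩ := x
        simp only [Submodule.mem_comap, LinearMap.mem_ker, hφ, LinearMap.comp_apply,
          Submodule.subtype_apply]
        constructor
        · intro h
          exact LinearMap.mem_ker.mp (HX_le_ker_S n hn h)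
        · intro h
          exact blockConstant_mem_HX n hn v (HZperp_blockConstant n hn v hv) h
      have hsurj : Function.Surjective φ := by
        intro c
        refine ⟨c • ⟨allOnes n, hallmem⟩, ?_⟩
        rw [map_smul]
        show c • Sfun n hn (allOnes n) = c
        rw [hSall, smul_eq_mul, mul_one]
      rw [hker]
      have e := φ.quotKerEquivOfSurjective hsurj
      rw [Nat.card_congr e.toEquiv, Nat.card_eq_fintype_card, ZMod.card]
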